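/- Let X be path connected, locally path connected, semilocally simply connected, locally compact and Hausdorff. The action of the topologised fundamental groupoid Π₁(X) on X itself (where [γ] sends γ(0) to γ(1)) is proper if and only if the fundamental group π₁(X) is finite. -/

import Mathlib

noncomputable section

attribute [local instance] Path.Homotopic.setoid

/-- The setoid of endpoint-fixing homotopy on the path space `C([0,1], X)`. -/
def homotopicRelSetoid (X : Type*) [TopologicalSpace X] : Setoid C(unitInterval, X) :=
  ⟨fun γ δ => ContinuousMap.HomotopicRel γ δ {0, 1},
    ContinuousMap.HomotopicRel.equivalence⟩

/-- The topologised fundamental groupoid `Π₁(X)`: the quotient of the path space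
(with the compact-open topology) by endpoint-fixing homotopy, carrying the quotient
topology. -/
def PiOne (X : Type*) [TopologicalSpace X] : Type _ :=
  Quotient (homotopicRelSetoid X)

instance (X : Type*) [TopologicalSpace X] : TopologicalSpace (PiOne X) :=
  instTopologicalSpaceQuotient

/-- The kinetics map of the action of `Π₁(X)` on its unit space `X`:
`[γ] ↦ (γ 1, γ 0)`. -/
def PiOne.kin {X : Type*} [TopologicalSpace X] : PiOne X → X × X :=
  Quotient.lift (fun γ => (γ 1, γ 0)) fun γ δ h => by
    have h0 : γ 0 = δ 0 := h.some.fst_eq_snd (by simp)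
    have h1 : γ 1 = δ 1 := h.some.fst_eq_snd (by simp)
    simp [h0, h1]

open unitInterval Set CategoryTheory

namespace PiOneAux

variable {X : Type*} [TopologicalSpace X]

/-- Class of a continuous map in `PiOne`. -/
def mk (f : C(I, X)) : PiOne X := Quotient.mk (homotopicRelSetoid X) f

/-- Class of a path in `PiOne`. -/
def cl {x y : X} (p : Path x y) : PiOne X := mk p.toContinuousMap

/-- A continuous map on `I` as a path. -/
def toPath (f : C(I, X)) : Path (f 0) (f 1) := ⟨f, rfl, rfl⟩

lemma cl_toPath (f : C(I, X)) : cl (toPath f) = mk f := rfl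

lemma kin_mk (f : C(I, X)) : PiOne.kin (mk f) = (f 1, f 0) := rfl

lemma kin_cl {x y : X} (p : Path x y) : PiOne.kin (cl p) = (y, x) := by
  show (p.toContinuousMap 1, p.toContinuousMap 0) = (y, x)
  simp

lemma cl_homotopic {x y : X} {p q : Path x y} (h : p.Homotopic q) : cl p = cl q :=
  Quotient.sound h

lemma cl_funext {x y x' y' : X} {p : Path x y} {q : Path x' y'}
    (h : ∀ t, p t = q t) : cl p = cl q := by
  unfold cl mk
  congr 1
  exact ContinuousMap.ext h

/-- fundamental groupoid morphism of a path -/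
def fgh {x y : X} (p : Path x y) : (⟨x⟩ : FundamentalGroupoid X) ⟶ ⟨y⟩ := ⟦p⟧

lemma fgh_trans {x y z : X} (p : Path x y) (q : Path y z) :
    fgh (p.trans q) = fgh p ≫ fgh q := rfl

lemma fgh_refl (x : X) : fgh (Path.refl x) = 𝟙 (⟨x⟩ : FundamentalGroupoid X) := rfl

lemma fgh_symm {x y : X} (p : Path x y) : fgh p.symm = inv (fgh p) := by
  rw [← Groupoid.inv_eq_inv]
  rfl

lemma cl_fgh {x y : X} {p q : Path x y} (h : fgh p = fgh q) : cl p = cl q :=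
  cl_homotopic (Quotient.exact h)

lemma fgh_of_cl {x y : X} {p q : Path x y} (h : cl p = cl q) : fgh p = fgh q := by
  have h2 : (homotopicRelSetoid X).r p.toContinuousMap q.toContinuousMap := Quotient.exact h
  exact Quotient.sound h2

lemma fgh_cast {x y x' y' : X} (p : Path x y) (hx : x' = x) (hy : y' = y) :
    fgh (p.cast hx hy) =
      eqToHom (by rw [hx]) ≫ fgh p ≫ eqToHom (by rw [hy]) := by
  subst hx; subst hy
  simp only [eqToHom_refl, Category.comp_id, Category.id_comp]
  have h2 : p.cast rfl rfl = p := by ext t; rfl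
  rw [h2]

lemma toPath_coe {x y : X} (p : Path x y) :
    toPath (p.toContinuousMap) = p.cast p.source p.target := rfl

end PiOneAux

namespace PiOneAux

variable {X : Type*} [TopologicalSpace X]

/-- projection onto the unit interval -/
def prI : ℝ → I := Set.projIcc 0 1 zero_le_one

lemma prI_of_mem {x : ℝ} (h : x ∈ Set.Icc (0:ℝ) 1) : (prI x : ℝ) = x := by
  simp [prI, Set.projIcc_of_mem zero_le_one h]

lemma prI_coe (t : I) : prI (t : ℝ) = t := by
  ext; exact prI_of_mem t.2

/-- An auxiliary (piecewise affine) reparametrisation function. -/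
def aux (a b c : ℝ) (t : I) : ℝ :=
  if (t:ℝ) ≤ 1/2 then 2*(t:ℝ)*(b-a)/(c-a)
  else ((b-a) + (2*(t:ℝ)-1)*(c-b))/(c-a)

lemma aux_continuous (a b c : ℝ) : Continuous (aux a b c) := by
  unfold aux
  apply Continuous.if_le (by continuity) (by continuity) (by continuity) (by continuity)
  intro t ht
  rw [ht]
  ring

lemma aux_zero (a b c : ℝ) : aux a b c 0 = 0 := by
  unfold aux
  norm_num

lemma aux_one {a b c : ℝ} (h : c - a ≠ 0) : aux a b c 1 = 1 := by
  have h1 : ¬((1:I):ℝ) ≤ 1/2 := by norm_num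
  unfold aux
  rw [if_neg h1]
  field_simp
  try ring
  simp only [Set.Icc.coe_one, mul_one, one_mul]
  ring

lemma aux_mem {a b c : ℝ} (hab : a ≤ b) (hbc : b ≤ c) (hac : a < c) (t : I) :
    aux a b c t ∈ Set.Icc (0:ℝ) 1 := by
  unfold aux
  have h1 : (0:ℝ) ≤ (t:ℝ) := t.2.1
  have h2 : (t:ℝ) ≤ 1 := t.2.2
  split_ifs with h
  · constructor
    · apply div_nonneg (by nlinarith) (by linarith)
    · rw [div_le_one (by linarith)]
      nlinarith
  · push_neg at h
    constructor
    · apply div_nonneg (by nlinarith) (by linarith)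
    · rw [div_le_one (by linarith)]
      nlinarith

/-- The restriction of a continuous map on `I` to the (affinely reparametrised) interval
`[a, b]`, as a path. -/
def sgm (δ : C(I, X)) (a b : I) : Path (δ a) (δ b) where
  toFun t := δ (prI ((a : ℝ) + (t : ℝ) * ((b : ℝ) - (a : ℝ))))
  continuous_toFun := by
    apply δ.continuous.comp
    exact continuous_projIcc.comp (by continuity)
  source' := by simp [prI_coe]
  target' := by
    have : (a : ℝ) + (1 : ℝ) * ((b : ℝ) - (a : ℝ)) = (b : ℝ) := by ring
    simp [this, prI_coe]

lemma sgm_apply (δ : C(I, X)) (a b : I) (t : I) :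
    sgm δ a b t = δ (prI ((a : ℝ) + (t : ℝ) * ((b : ℝ) - (a : ℝ)))) := rfl

lemma sgm_self (δ : C(I, X)) (a : I) : sgm δ a a = Path.refl (δ a) := by
  ext t
  simp [sgm_apply, Path.refl_apply, prI_coe]

lemma sgm_zero_one (δ : C(I, X)) : sgm δ 0 1 = toPath δ := by
  ext t
  show δ _ = δ t
  congr 1
  rw [show ((0:I):ℝ) + (t:ℝ) * (((1:I):ℝ) - ((0:I):ℝ)) = (t:ℝ) by norm_num]
  exact prI_coe t

lemma sgm_mem {δ : C(I, X)} {a b : I} (hab : a ≤ b) (t : I) :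
    ∃ s ∈ Set.Icc a b, sgm δ a b t = δ s := by
  have hab' : (a:ℝ) ≤ (b:ℝ) := hab
  have h1 : (0:ℝ) ≤ (t:ℝ) := t.2.1
  have h2 : (t:ℝ) ≤ 1 := t.2.2
  have hmem : (a : ℝ) + (t : ℝ) * ((b : ℝ) - (a : ℝ)) ∈ Set.Icc (0:ℝ) 1 := by
    constructor
    · nlinarith [a.2.1, b.2.1]
    · nlinarith [a.2.2, b.2.2]
  have hc : (prI ((a : ℝ) + (t : ℝ) * ((b : ℝ) - (a : ℝ))) : ℝ)
      = (a : ℝ) + (t : ℝ) * ((b : ℝ) - (a : ℝ)) := prI_of_mem hmem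
  refine ⟨prI ((a : ℝ) + (t : ℝ) * ((b : ℝ) - (a : ℝ))), ?_, rfl⟩
  rw [Set.mem_Icc]
  constructor
  · exact Subtype.coe_le_coe.mp (by rw [hc]; nlinarith)
  · exact Subtype.coe_le_coe.mp (by rw [hc]; nlinarith)

lemma sgm_range_subset {δ : C(I, X)} {a b : I} (hab : a ≤ b) {W : Set X}
    (hW : Set.MapsTo δ (Set.Icc a b) W) : Set.range (sgm δ a b) ⊆ W := by
  rintro _ ⟨t, rfl⟩
  obtain ⟨s, hs, heq⟩ := sgm_mem (δ := δ) hab t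
  rw [heq]
  exact hW hs

open CategoryTheory in
lemma sgm_trans (δ : C(I, X)) {a b c : I} (hab : a ≤ b) (hbc : b ≤ c) :
    fgh (sgm δ a b) ≫ fgh (sgm δ b c) = fgh (sgm δ a c) := by
  rw [← fgh_trans]
  rcases eq_or_lt_of_le (le_trans hab hbc) with hac | hac
  · have hb : a = b := le_antisymm hab (hac ▸ hbc)
    subst hb
    rcases hac with rfl
    rw [sgm_self]
    exact Quotient.sound ⟨Path.Homotopy.reflTrans _⟩
  · have hacR : (a:ℝ) < (c:ℝ) := hac
    have hne : (c:ℝ) - (a:ℝ) ≠ 0 := by linarith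
    have habR : (a:ℝ) ≤ (b:ℝ) := hab
    have hbcR : (b:ℝ) ≤ (c:ℝ) := hbc
    set φ : I → I := fun t => prI (aux (a:ℝ) (b:ℝ) (c:ℝ) t) with hφ
    have hφc : Continuous φ := continuous_projIcc.comp (aux_continuous _ _ _)
    have hφval : ∀ t : I, (φ t : ℝ) = aux (a:ℝ) (b:ℝ) (c:ℝ) t := fun t =>
      prI_of_mem (aux_mem habR hbcR hacR t)
    have hφ0 : φ 0 = 0 := by
      ext
      rw [hφval, aux_zero]
      norm_num
    have hφ1 : φ 1 = 1 := by
      ext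
      rw [hφval, aux_one hne]
      norm_num
    have hkey : (sgm δ a b).trans (sgm δ b c) = (sgm δ a c).reparam φ hφc hφ0 hφ1 := by
      ext t
      rw [Path.trans_apply]
      show _ = sgm δ a c (φ t)
      rw [sgm_apply]
      split_ifs with h
      · rw [sgm_apply]
        congr 2
        rw [hφval]
        unfold aux
        rw [if_pos h]
        field_simp
        try ring
      · rw [sgm_apply]
        congr 2
        rw [hφval]
        unfold aux
        rw [if_neg h]
        field_simp
        try ring
    rw [hkey]
    exact Quotient.sound ⟨(Path.Homotopy.reparam _ φ hφc hφ0 hφ1).symm⟩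

end PiOneAux

namespace PiOneAux

open CategoryTheory

variable {X : Type*} [TopologicalSpace X]

/-- every loop contained in `W` is null-homotopic (in the ambient space). -/
def NullIn (W : Set X) : Prop :=
  ∀ (z : X) (γ : Path z z), Set.range γ ⊆ W → γ.Homotopic (Path.refl z)

lemma NullIn.mono {W W' : Set X} (h : NullIn W) (hsub : W' ⊆ W) : NullIn W' :=
  fun z γ hr => h z γ (hr.trans hsub)

lemma null_fgh {W : Set X} (hW : NullIn W) {z : X} {γ : Path z z}
    (h : Set.range γ ⊆ W) : fgh γ = 𝟙 (⟨z⟩ : FundamentalGroupoid X) :=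
  Quotient.sound (hW z γ h)

lemma nice_nbhd [LocallyPathConnectedSpace X]
    (hslsc : ∀ x : X, ∃ U ∈ nhds x, NullIn U) (x : X) {S : Set X} (hS : S ∈ nhds x) :
    ∃ Ω : Set X, IsOpen Ω ∧ x ∈ Ω ∧ IsPathConnected Ω ∧ NullIn Ω ∧ Ω ⊆ S := by
  obtain ⟨U, hU, hnull⟩ := hslsc x
  have hmem : x ∈ interior (U ∩ S) :=
    mem_interior_iff_mem_nhds.2 (Filter.inter_mem hU hS)
  refine ⟨pathComponentIn (interior (U ∩ S)) x, isOpen_interior.pathComponentIn x,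
    mem_pathComponentIn_self hmem, isPathConnected_pathComponentIn hmem,
    hnull.mono ?_, ?_⟩
  · exact pathComponentIn_subset.trans (interior_subset.trans Set.inter_subset_left)
  · exact pathComponentIn_subset.trans (interior_subset.trans Set.inter_subset_right)

lemma trans_apply_congr {x y z x' y' z' : X} {p : Path x y} {q : Path y z}
    {p' : Path x' y'} {q' : Path y' z'}
    (hp : ∀ t, p t = p' t) (hq : ∀ t, q t = q' t) : ∀ t, p.trans q t = p'.trans q' t := by
  intro t
  rw [Path.trans_apply, Path.trans_apply]
  split_ifs with h
  · exact hp _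
  · exact hq _

lemma symm_apply_congr {x y x' y' : X} {p : Path x y} {p' : Path x' y'}
    (hp : ∀ t, p t = p' t) : ∀ t, p.symm t = p'.symm t := by
  intro t
  show p (unitInterval.symm t) = p' (unitInterval.symm t)
  exact hp _

/-- **Core lemma**: each continuous map `δ` on `I` has a compact-open neighbourhood `N`
such that every `δ' ∈ N` is homotopic to `δ` after attaching small connecting paths at
the two endpoints. -/
theorem main_nbhd [PathConnectedSpace X] [LocallyPathConnectedSpace X]
    (hslsc : ∀ x : X, ∃ U ∈ nhds x, NullIn U)
    (δ : C(I, X)) {U V : Set X} (hUo : IsOpen U) (hVo : IsOpen V)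
    (h0 : δ 0 ∈ V) (h1 : δ 1 ∈ U) :
    ∃ N : Set C(I, X), IsOpen N ∧ δ ∈ N ∧ ∀ δ' ∈ N,
      ∃ (α : Path (δ 0) (δ' 0)) (β : Path (δ 1) (δ' 1)),
        Set.range α ⊆ V ∧ Set.range β ⊆ U ∧
        mk δ' = cl (α.symm.trans ((toPath δ).trans β)) := by
  classical
  -- small null sets around every point
  have hWo : ∀ x : X, ∃ W : Set X, IsOpen W ∧ x ∈ W ∧ NullIn W := by
    intro x
    obtain ⟨W, hW, hnull⟩ := hslsc x
    exact ⟨interior W, isOpen_interior, mem_interior_iff_mem_nhds.2 hW,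
      hnull.mono interior_subset⟩
  choose Wo hWoO hWomem hWoN using hWo
  -- Lebesgue number for the covering of I
  obtain ⟨ε, hε, hball⟩ := lebesgue_number_lemma_of_metric (s := (Set.univ : Set I))
    (c := fun x : X => δ ⁻¹' (Wo x)) isCompact_univ
    (fun x => (hWoO x).preimage δ.continuous)
    (fun t _ => Set.mem_iUnion.2 ⟨δ t, hWomem (δ t)⟩)
  obtain ⟨n0, hn0⟩ := exists_nat_one_div_lt hε
  set n : ℕ := n0 + 1 with hn
  have hnpos : 0 < (n:ℝ) := by positivity
  have hlt : 1 / (n:ℝ) < ε := by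
    rw [hn]; push_cast; exact hn0
  -- the subdivision points
  set tk : ℕ → I := fun k => prI ((k : ℝ) / n) with htkdef
  have htk : ∀ k, (tk k : ℝ) = min 1 ((k:ℝ)/n) := by
    intro k
    show (Set.projIcc (0:ℝ) 1 zero_le_one ((k:ℝ)/n) : ℝ) = _
    rw [Set.coe_projIcc]
    rw [max_eq_right]
    exact le_min zero_le_one (by positivity)
  have htkmono : ∀ {j l}, j ≤ l → tk j ≤ tk l := by
    intro j l hjl
    show (tk j : ℝ) ≤ (tk l : ℝ)
    rw [htk, htk]
    exact min_le_min (le_refl 1) ((div_le_div_iff_of_pos_right hnpos).2 (by exact_mod_cast hjl))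
  have htkgap : ∀ k, (tk (k+1) : ℝ) - (tk k : ℝ) ≤ 1 / n := by
    intro k
    have hpos : (0:ℝ) < 1/n := by positivity
    rw [htk, htk]
    have hcast : (((k+1) : ℕ):ℝ)/n = (k:ℝ)/n + 1/n := by push_cast; ring
    rw [hcast]
    rcases le_total (1:ℝ) ((k:ℝ)/n) with h | h
    · rw [min_eq_left h, min_eq_left (by linarith)]
      linarith
    · rw [min_eq_right h]
      have h2 : min 1 ((k:ℝ)/n + 1/n) ≤ (k:ℝ)/n + 1/n := min_le_right _ _
      linarith
  have htk0 : tk 0 = 0 := by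
    ext; rw [htk]; norm_num
  have htk1 : ∀ k, n ≤ k → tk k = 1 := by
    intro k hk
    ext; rw [htk]
    rw [min_eq_left]
    · rfl
    · rw [le_div_iff₀ hnpos]
      rw [one_mul]
      exact_mod_cast hk
  -- segment sets
  have hWseg : ∀ k : ℕ, ∃ W : Set X, IsOpen W ∧ NullIn W ∧
      Set.MapsTo δ (Set.Icc (tk k) (tk (k+1))) W := by
    intro k
    obtain ⟨x, hx⟩ := hball (tk k) trivial
    refine ⟨Wo x, hWoO x, hWoN x, fun y hy => ?_⟩
    apply hx
    rw [Metric.mem_ball, Subtype.dist_eq, Real.dist_eq, abs_of_nonneg (by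
      have : (tk k : ℝ) ≤ (y : ℝ) := hy.1
      linarith)]
    have h2 : (y:ℝ) ≤ tk (k+1) := hy.2
    have := htkgap k
    linarith
  choose Wseg hWsO hWsN hWsM using hWseg
  -- connecting sets
  set A : ℕ → Set X := fun k =>
    (if k = 0 then V else Wseg (k-1)) ∩ ((if n ≤ k then U else Set.univ) ∩ Wseg k) with hA
  have hAopen : ∀ k, IsOpen (A k) := by
    intro k
    rw [hA]
    refine IsOpen.inter ?_ (IsOpen.inter ?_ (hWsO k)) <;> split_ifs
    exacts [hVo, hWsO _, hUo, isOpen_univ]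
  have hAsub : ∀ k, A k ⊆ Wseg k := fun k y hy => hy.2.2
  have hAsub' : ∀ k, A (k+1) ⊆ Wseg k := by
    intro k y hy
    have := hy.1
    rw [if_neg (Nat.succ_ne_zero k), Nat.add_sub_cancel] at this
    exact this
  have hA0 : A 0 ⊆ V := by
    intro y hy
    have := hy.1
    rwa [if_pos rfl] at this
  have hAn : A n ⊆ U := by
    intro y hy
    have := hy.2.1
    rwa [if_pos (le_refl n)] at this
  have hAmem : ∀ k, δ (tk k) ∈ A k := by
    intro k
    rw [hA]
    refine ⟨?_, ?_, hWsM k ⟨le_refl _, htkmono (Nat.le_succ k)⟩⟩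
    · rcases Nat.eq_zero_or_pos k with rfl | hk
      · rw [if_pos rfl, htk0]; exact h0
      · rw [if_neg (Nat.pos_iff_ne_zero.mp hk)]
        have hk1 : k - 1 + 1 = k := Nat.succ_pred_eq_of_pos hk
        have := hWsM (k-1) (show tk k ∈ Set.Icc (tk (k-1)) (tk (k-1+1)) by
          rw [hk1]; exact ⟨htkmono (Nat.pred_le k), le_refl _⟩)
        exact this
    · split_ifs with hnk
      · rw [htk1 k hnk]; exact h1
      · trivial
  set P : ℕ → Set X := fun k => pathComponentIn (A k) (δ (tk k)) with hP
  have hPopen : ∀ k, IsOpen (P k) := fun k => (hAopen k).pathComponentIn _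
  have hPmem : ∀ k, δ (tk k) ∈ P k := fun k => mem_pathComponentIn_self (hAmem k)
  have hPpc : ∀ k, IsPathConnected (P k) := fun k => isPathConnected_pathComponentIn (hAmem k)
  have hPsub : ∀ k, P k ⊆ A k := fun k => pathComponentIn_subset
  -- the neighbourhood
  refine ⟨{g : C(I,X) | (∀ k < n, Set.MapsTo g (Set.Icc (tk k) (tk (k+1))) (Wseg k)) ∧
      ∀ k ≤ n, g (tk k) ∈ P k}, ?_, ⟨fun k _ => hWsM k, fun k _ => hPmem k⟩, ?_⟩
  · -- openness
    have : {g : C(I,X) | (∀ k < n, Set.MapsTo g (Set.Icc (tk k) (tk (k+1))) (Wseg k)) ∧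
        ∀ k ≤ n, g (tk k) ∈ P k} =
        (⋂ k ∈ Finset.range n, {g : C(I,X) | Set.MapsTo g (Set.Icc (tk k) (tk (k+1))) (Wseg k)})
        ∩ (⋂ k ∈ Finset.range (n+1), {g : C(I,X) | g (tk k) ∈ P k}) := by
      ext g
      simp [Finset.mem_range, Nat.lt_succ_iff]
    rw [this]
    refine IsOpen.inter ?_ ?_
    · refine isOpen_biInter_finset fun k _ => ?_
      exact ContinuousMap.isOpen_setOf_mapsTo isClosed_Icc.isCompact (hWsO k)
    · refine isOpen_biInter_finset fun k _ => ?_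
      exact (hPopen k).preimage (continuous_eval_const (tk k))
  · -- the homotopy statement
    rintro δ' ⟨hδ'W, hδ'P⟩
    have hα : ∀ k, ∃ p : Path (δ (tk k)) (δ' (tk k)), k ≤ n → Set.range p ⊆ P k := by
      intro k
      by_cases hk : k ≤ n
      · have hj := (hPpc k).joinedIn _ (hPmem k) _ (hδ'P k hk)
        refine ⟨hj.somePath, fun _ => ?_⟩
        rintro _ ⟨t, rfl⟩
        exact hj.somePath_mem t
      · exact ⟨PathConnectedSpace.somePath _ _, fun h => absurd h hk⟩
    choose α hαP using hα
    have claim : ∀ k, k ≤ n → fgh (sgm δ' (tk 0) (tk k)) =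
        inv (fgh (α 0)) ≫ (fgh (sgm δ (tk 0) (tk k)) ≫ fgh (α k)) := by
      intro k
      induction k with
      | zero =>
        intro _
        rw [sgm_self, sgm_self]
        simp [fgh_refl]
      | succ k ih =>
        intro hk1
        have hk : k ≤ n := Nat.le_of_succ_le hk1
        have hkn : k < n := hk1
        have hm0k : tk 0 ≤ tk k := htkmono (Nat.zero_le k)
        have hmk : tk k ≤ tk (k+1) := htkmono (Nat.le_succ k)
        have hr1 : Set.range (α k) ⊆ Wseg k := (hαP k hk).trans ((hPsub k).trans (hAsub k))
        have hr2 : Set.range (α (k+1)) ⊆ Wseg k :=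
          (hαP (k+1) hk1).trans ((hPsub (k+1)).trans (hAsub' k))
        have hr3 : Set.range (sgm δ (tk k) (tk (k+1))) ⊆ Wseg k :=
          sgm_range_subset hmk (hWsM k)
        have hr4 : Set.range (sgm δ' (tk k) (tk (k+1))) ⊆ Wseg k :=
          sgm_range_subset hmk (hδ'W k hkn)
        have hrl : Set.range ((α k).symm.trans ((sgm δ (tk k) (tk (k+1))).trans
            ((α (k+1)).trans (sgm δ' (tk k) (tk (k+1))).symm))) ⊆ Wseg k := by
          simp only [Path.trans_range, Path.symm_range, Set.union_subset_iff]
          exact ⟨hr1, hr3, hr2, hr4⟩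
        have hl := null_fgh (hWsN k) hrl
        rw [fgh_trans, fgh_symm, fgh_trans, fgh_trans, fgh_symm] at hl
        rw [IsIso.inv_comp_eq, Category.comp_id] at hl
        have key : fgh (sgm δ (tk k) (tk (k+1))) ≫ fgh (α (k+1)) =
            fgh (α k) ≫ fgh (sgm δ' (tk k) (tk (k+1))) := by
          calc fgh (sgm δ (tk k) (tk (k+1))) ≫ fgh (α (k+1))
              = (fgh (sgm δ (tk k) (tk (k+1))) ≫ (fgh (α (k+1)) ≫
                  inv (fgh (sgm δ' (tk k) (tk (k+1)))))) ≫ fgh (sgm δ' (tk k) (tk (k+1))) := by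
                simp [Category.assoc]
            _ = fgh (α k) ≫ fgh (sgm δ' (tk k) (tk (k+1))) := by rw [hl]
        rw [← sgm_trans δ' hm0k hmk, ← sgm_trans δ hm0k hmk, ih hk]
        simp only [Category.assoc]
        rw [key]
    have hclaim := claim n (le_refl n)
    -- endpoint bookkeeping
    have e0 : ((tk 0 : I) : ℝ) = 0 := by rw [htk0]; rfl
    have e1 : ((tk n : I) : ℝ) = 1 := by rw [htk1 n (le_refl n)]; rfl
    have hpt : ∀ (g : C(I,X)) (t : I), sgm g (tk 0) (tk n) t = g t := by
      intro g t
      rw [sgm_apply, e0, e1, show (0:ℝ) + (t:ℝ) * ((1:ℝ) - 0) = (t:ℝ) by ring, prI_coe]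
    have hd0 : δ 0 = δ (tk 0) := by rw [htk0]
    have hd0' : δ' 0 = δ' (tk 0) := by rw [htk0]
    have hd1 : δ 1 = δ (tk n) := by rw [htk1 n (le_refl n)]
    have hd1' : δ' 1 = δ' (tk n) := by rw [htk1 n (le_refl n)]
    refine ⟨(α 0).cast hd0 hd0', (α n).cast hd1 hd1', ?_, ?_, ?_⟩
    · rw [Path.cast_coe]
      exact (hαP 0 (Nat.zero_le n)).trans ((hPsub 0).trans hA0)
    · rw [Path.cast_coe]
      exact (hαP n (le_refl n)).trans ((hPsub n).trans hAn)
    · have step1 : mk δ' = cl (sgm δ' (tk 0) (tk n)) := by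
        rw [← cl_toPath δ']
        exact cl_funext fun t => (hpt δ' t).symm
      have step2 : cl (sgm δ' (tk 0) (tk n)) =
          cl ((α 0).symm.trans ((sgm δ (tk 0) (tk n)).trans (α n))) := by
        apply cl_fgh
        rw [fgh_trans, fgh_symm, fgh_trans]
        exact hclaim
      have step3 : cl ((α 0).symm.trans ((sgm δ (tk 0) (tk n)).trans (α n))) =
          cl (((α 0).cast hd0 hd0').symm.trans ((toPath δ).trans ((α n).cast hd1 hd1'))) := by
        apply cl_funext
        apply trans_apply_congr
        · apply symm_apply_congr
          intro t
          rw [Path.cast_coe]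
        · apply trans_apply_congr
          · intro t
            exact hpt δ t
          · intro t
            rw [Path.cast_coe]
      rw [step1, step2, step3]

end PiOneAux

namespace PiOneAux

open CategoryTheory

variable {X : Type*} [TopologicalSpace X]

lemma isOpen_piOne_iff {S : Set (PiOne X)} : IsOpen S ↔ IsOpen (mk ⁻¹' S) :=
  isOpen_coinduced

/-- The basic "sheet" subset of `PiOne X` determined by a path `η` and two sets. -/
def Sheet {u v : X} (η : Path u v) (U V : Set X) : Set (PiOne X) :=
  {c | ∃ (b a : X) (α : Path u b) (β : Path v a),
      Set.range α ⊆ V ∧ Set.range β ⊆ U ∧ c = cl (α.symm.trans (η.trans β))}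

lemma sheet_kin {u v : X} {η : Path u v} {U V : Set X} {c : PiOne X}
    (h : c ∈ Sheet η U V) : (PiOne.kin c).1 ∈ U ∧ (PiOne.kin c).2 ∈ V := by
  obtain ⟨b, a, α, β, hα, hβ, rfl⟩ := h
  rw [kin_cl]
  exact ⟨hβ ⟨1, β.target⟩, hα ⟨1, α.target⟩⟩

lemma sheet_congr {u v : X} {η η' : Path u v} {U V : Set X} (h : fgh η = fgh η') :
    Sheet η U V = Sheet η' U V := by
  have key : ∀ (b a : X) (α : Path u b) (β : Path v a),
      cl (α.symm.trans (η.trans β)) = cl (α.symm.trans (η'.trans β)) := by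
    intro b a α β
    apply cl_fgh
    rw [fgh_trans, fgh_trans, fgh_trans, fgh_trans, h]
  ext c
  constructor
  · rintro ⟨b, a, α, β, hα, hβ, rfl⟩
    exact ⟨b, a, α, β, hα, hβ, (key b a α β).symm ▸ key b a α β⟩
  · rintro ⟨b, a, α, β, hα, hβ, rfl⟩
    exact ⟨b, a, α, β, hα, hβ, (key b a α β).symm⟩

lemma sheet_fiber_unique {u v : X} {η : Path u v} {U V : Set X}
    (hUnull : NullIn U) (hVnull : NullIn V) {c c' : PiOne X}
    (hc : c ∈ Sheet η U V) (hc' : c' ∈ Sheet η U V)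
    (hkin : PiOne.kin c = PiOne.kin c') : c = c' := by
  obtain ⟨b, a, α, β, hα, hβ, rfl⟩ := hc
  obtain ⟨b', a', α', β', hα', hβ', rfl⟩ := hc'
  rw [kin_cl, kin_cl, Prod.mk.injEq] at hkin
  obtain ⟨ha, hb⟩ := hkin
  subst ha; subst hb
  have hαα : fgh α = fgh α' := by
    have hloop : Set.range (α.symm.trans α') ⊆ V := by
      rw [Path.trans_range, Path.symm_range]
      exact Set.union_subset hα hα'
    have := null_fgh hVnull hloop
    rw [fgh_trans, fgh_symm, IsIso.inv_comp_eq, Category.comp_id] at this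
    exact this.symm
  have hββ : fgh β = fgh β' := by
    have hloop : Set.range (β.symm.trans β') ⊆ U := by
      rw [Path.trans_range, Path.symm_range]
      exact Set.union_subset hβ hβ'
    have := null_fgh hUnull hloop
    rw [fgh_trans, fgh_symm, IsIso.inv_comp_eq, Category.comp_id] at this
    exact this.symm
  apply cl_fgh
  rw [fgh_trans, fgh_trans, fgh_symm, fgh_trans, fgh_trans, fgh_symm, hαα, hββ]

lemma sheet_cover {u v : X} {U V : Set X} (hUpc : IsPathConnected U)
    (hVpc : IsPathConnected V) (hu : u ∈ V) (hv : v ∈ U) (c : PiOne X)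
    (h1 : (PiOne.kin c).1 ∈ U) (h2 : (PiOne.kin c).2 ∈ V) :
    ∃ η : Path u v, c ∈ Sheet η U V := by
  obtain ⟨f, rfl⟩ := Quotient.exists_rep c
  have h1' : f 1 ∈ U := h1
  have h2' : f 0 ∈ V := h2
  have hjα := hVpc.joinedIn u hu (f 0) h2'
  have hjβ := hUpc.joinedIn v hv (f 1) h1'
  set α := hjα.somePath with hαdef
  set β := hjβ.somePath with hβdef
  refine ⟨α.trans ((toPath f).trans β.symm), f 0, f 1, α, β, ?_, ?_, ?_⟩
  · rintro _ ⟨t, rfl⟩; exact hjα.somePath_mem t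
  · rintro _ ⟨t, rfl⟩; exact hjβ.somePath_mem t
  · show mk f = _
    rw [← cl_toPath f]
    apply cl_fgh
    rw [fgh_trans, fgh_symm, fgh_trans, fgh_trans, fgh_trans, fgh_symm]
    simp [Category.assoc]

theorem isOpen_sheet [PathConnectedSpace X] [LocallyPathConnectedSpace X]
    (hslsc : ∀ x : X, ∃ S ∈ nhds x, NullIn S)
    {u v : X} (η : Path u v) {U V : Set X} (hUo : IsOpen U) (hVo : IsOpen V) :
    IsOpen (Sheet η U V) := by
  rw [isOpen_piOne_iff]
  rw [isOpen_iff_forall_mem_open]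
  intro f hf
  obtain ⟨b, a, α, β, hα, hβ, hc⟩ := hf
  have hkin := congrArg PiOne.kin hc
  rw [kin_mk, kin_cl, Prod.mk.injEq] at hkin
  obtain ⟨ha, hb⟩ := hkin
  subst ha; subst hb
  have hf0 : f 0 ∈ V := hα ⟨1, α.target⟩
  have hf1 : f 1 ∈ U := hβ ⟨1, β.target⟩
  obtain ⟨N, hNo, hNf, hN⟩ := main_nbhd hslsc f hUo hVo hf0 hf1
  refine ⟨N, ?_, hNo, hNf⟩
  intro g hg
  obtain ⟨α', β', hα', hβ', hgc⟩ := hN g hg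
  have hfg : fgh (toPath f) = fgh (α.symm.trans (η.trans β)) :=
    fgh_of_cl (by rw [cl_toPath, hc])
  refine ⟨g 0, g 1, α.trans α', β.trans β', ?_, ?_, ?_⟩
  · rw [Path.trans_range]; exact Set.union_subset hα hα'
  · rw [Path.trans_range]; exact Set.union_subset hβ hβ'
  · show mk g = _
    rw [hgc]
    apply cl_fgh
    simp only [fgh_trans, fgh_symm]
    rw [hfg]
    simp only [fgh_trans, fgh_symm]
    simp [Category.assoc]

theorem forward_direction [PathConnectedSpace X] [LocallyPathConnectedSpace X]
    (hslsc : ∀ x : X, ∃ S ∈ nhds x, NullIn S)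
    (hprop : ∀ K : Set (X × X), IsCompact K → IsCompact (PiOne.kin ⁻¹' K)) (x : X) :
    Finite (Path.Homotopic.Quotient x x) := by
  classical
  obtain ⟨Ω, hΩo, hΩx, hΩpc, hΩnull, -⟩ := nice_nbhd hslsc x (Filter.univ_mem)
  have hF : IsCompact (PiOne.kin ⁻¹' {((x : X), x)}) := hprop _ isCompact_singleton
  have hcover : PiOne.kin ⁻¹' {(x, x)} ⊆ ⋃ η : Path x x, Sheet η Ω Ω := by
    intro c hc
    rw [Set.mem_preimage, Set.mem_singleton_iff] at hc
    have h1 : (PiOne.kin c).1 ∈ Ω := by rw [hc]; exact hΩx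
    have h2 : (PiOne.kin c).2 ∈ Ω := by rw [hc]; exact hΩx
    obtain ⟨η, hη⟩ := sheet_cover hΩpc hΩpc hΩx hΩx c h1 h2
    exact Set.mem_iUnion.2 ⟨η, hη⟩
  obtain ⟨t, ht⟩ := hF.elim_finite_subcover (fun η : Path x x => Sheet η Ω Ω)
    (fun η => isOpen_sheet hslsc η hΩo hΩo) hcover
  have hg : ∀ c : Path.Homotopic.Quotient x x, ∃ η ∈ t, cl c.out ∈ Sheet η Ω Ω := by
    intro c
    have hmem : cl c.out ∈ PiOne.kin ⁻¹' {((x : X), x)} := by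
      rw [Set.mem_preimage, kin_cl]
      rfl
    have := ht hmem
    simpa using this
  choose g hgt hgm using hg
  refine Finite.of_injective (fun c => (⟨g c, hgt c⟩ : {η // η ∈ t})) ?_
  intro c c' h
  rw [Subtype.mk.injEq] at h
  have hcc : cl (Quotient.out c) = cl (Quotient.out c') := by
    refine sheet_fiber_unique hΩnull hΩnull (hgm c) ?_ (by rw [kin_cl, kin_cl])
    rw [h]
    exact hgm c'
  have h2 := fgh_of_cl hcc
  rw [← Quotient.out_eq c, ← Quotient.out_eq c']
  exact h2

end PiOneAux

namespace PiOneAux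

open CategoryTheory Filter Topology

variable {X : Type*} [TopologicalSpace X]

/-- **Endpoint perturbation**: given `δ ∈ M` open, nearby endpoints can be reached by a
map in `M` in the same class as `δ` up to small connecting paths. -/
theorem tail_perturb [LocallyPathConnectedSpace X] (δ : C(I, X)) {M : Set C(I, X)}
    (hM : IsOpen M) (hδM : δ ∈ M) {U V : Set X} (hUo : IsOpen U) (hVo : IsOpen V)
    (h0 : δ 0 ∈ V) (h1 : δ 1 ∈ U) :
    ∃ Ω₀ Ω₁ : Set X, IsOpen Ω₀ ∧ IsOpen Ω₁ ∧ δ 0 ∈ Ω₀ ∧ δ 1 ∈ Ω₁ ∧ Ω₀ ⊆ V ∧ Ω₁ ⊆ U ∧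
      ∀ b ∈ Ω₀, ∀ a ∈ Ω₁, ∃ (f : C(I, X)) (α : Path (δ 0) b) (β : Path (δ 1) a),
        f ∈ M ∧ Set.range α ⊆ V ∧ Set.range β ⊆ U ∧
        mk f = cl (α.symm.trans ((toPath δ).trans β)) := by
  classical
  -- basic compact-open neighbourhood inside M
  have hbasis := TopologicalSpace.isTopologicalBasis_of_subbasis
    (ContinuousMap.compactOpen_eq (X := I) (Y := X))
  obtain ⟨w, hwB, hδw, hwM⟩ := hbasis.exists_subset_of_mem_open hδM hM
  obtain ⟨F, ⟨hFfin, hFsub⟩, rfl⟩ := hwB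
  haveI : Finite ↥F := hFfin.to_subtype
  have hKW : ∀ s : F, ∃ (K : Set I) (W : Set X), IsCompact K ∧ IsOpen W ∧
      (s : Set C(I, X)) = {g : C(I, X) | Set.MapsTo ⇑g K W} := by
    rintro ⟨s, hs⟩
    obtain ⟨K, hK, W, hW, heq⟩ := hFsub hs
    exact ⟨K, W, hK, hW, heq.symm⟩
  choose K W hKc hWo hseq using hKW
  have hδs : ∀ s : F, Set.MapsTo δ (K s) (W s) := by
    rintro ⟨s, hs⟩
    have h2 : δ ∈ s := Set.mem_sInter.1 hδw s hs
    rw [show s = {g : C(I, X) | Set.MapsTo ⇑g (K ⟨s, hs⟩) (W ⟨s, hs⟩)} from hseq ⟨s, hs⟩] at h2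
    exact h2
  -- the two connecting sets
  set A₀ : Set X := V ∩ ⋂ s : F, (if (0:I) ∈ K s then W s else Set.univ) with hA₀
  set A₁ : Set X := U ∩ ⋂ s : F, (if (1:I) ∈ K s then W s else Set.univ) with hA₁
  have hA₀o : IsOpen A₀ := hVo.inter (isOpen_iInter_of_finite fun s => by
    split_ifs; exacts [hWo s, isOpen_univ])
  have hA₁o : IsOpen A₁ := hUo.inter (isOpen_iInter_of_finite fun s => by
    split_ifs; exacts [hWo s, isOpen_univ])
  have hδ0A : δ 0 ∈ A₀ := by
    refine ⟨h0, Set.mem_iInter.2 fun s => ?_⟩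
    split_ifs with h
    · exact hδs s h
    · trivial
  have hδ1A : δ 1 ∈ A₁ := by
    refine ⟨h1, Set.mem_iInter.2 fun s => ?_⟩
    split_ifs with h
    · exact hδs s h
    · trivial
  set Ω₀ := pathComponentIn A₀ (δ 0) with hΩ₀
  set Ω₁ := pathComponentIn A₁ (δ 1) with hΩ₁
  have hΩ₀o : IsOpen Ω₀ := hA₀o.pathComponentIn _
  have hΩ₁o : IsOpen Ω₁ := hA₁o.pathComponentIn _
  have hΩ₀m : δ 0 ∈ Ω₀ := mem_pathComponentIn_self hδ0A
  have hΩ₁m : δ 1 ∈ Ω₁ := mem_pathComponentIn_self hδ1A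
  have hΩ₀pc : IsPathConnected Ω₀ := isPathConnected_pathComponentIn hδ0A
  have hΩ₁pc : IsPathConnected Ω₁ := isPathConnected_pathComponentIn hδ1A
  have hΩ₀V : Ω₀ ⊆ V := pathComponentIn_subset.trans Set.inter_subset_left
  have hΩ₁U : Ω₁ ⊆ U := pathComponentIn_subset.trans Set.inter_subset_left
  have hΩ₀W : ∀ s : F, (0:I) ∈ K s → Ω₀ ⊆ W s := by
    intro s hs y hy
    have := (pathComponentIn_subset hy).2
    have := Set.mem_iInter.1 this s
    rwa [if_pos hs] at this
  have hΩ₁W : ∀ s : F, (1:I) ∈ K s → Ω₁ ⊆ W s := by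
    intro s hs y hy
    have := (pathComponentIn_subset hy).2
    have := Set.mem_iInter.1 this s
    rwa [if_pos hs] at this
  -- choice of ε
  have hev : ∃ ε : ℝ, 0 < ε ∧ ε < 1/3 ∧
      (∀ t : I, (t:ℝ) ≤ ε → δ t ∈ Ω₀) ∧ (∀ t : I, 1 - ε ≤ (t:ℝ) → δ t ∈ Ω₁) ∧
      (∀ s : F, (0:I) ∉ K s → ∀ t ∈ K s, ε < (t:ℝ)) ∧
      (∀ s : F, (1:I) ∉ K s → ∀ t ∈ K s, (t:ℝ) < 1 - ε) := by
    have l1 : ∀ᶠ ε : ℝ in 𝓝[>] 0, 0 < ε := self_mem_nhdsWithin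
    have l2 : ∀ᶠ ε : ℝ in 𝓝[>] 0, ε < 1/3 :=
      nhdsWithin_le_nhds (Iio_mem_nhds (by norm_num))
    have l3 : ∀ᶠ ε : ℝ in 𝓝[>] 0, ∀ t : I, (t:ℝ) ≤ ε → δ t ∈ Ω₀ := by
      have : δ ⁻¹' Ω₀ ∈ nhds (0 : I) := (hΩ₀o.preimage δ.continuous).mem_nhds hΩ₀m
      obtain ⟨r, hr, hball⟩ := Metric.mem_nhds_iff.1 this
      filter_upwards [nhdsWithin_le_nhds (Iio_mem_nhds hr), self_mem_nhdsWithin]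
        with ε hε hε0 t ht
      rw [Set.mem_Iio] at hε
      apply hball
      rw [Metric.mem_ball, Subtype.dist_eq, Real.dist_eq]
      have h0t : (0:ℝ) ≤ (t:ℝ) := t.2.1
      rw [abs_of_nonneg (by norm_num [h0t])]
      · calc (t:ℝ) - ((0:I):ℝ) = (t:ℝ) := by norm_num
          _ ≤ ε := ht
          _ < r := hε
    have l4 : ∀ᶠ ε : ℝ in 𝓝[>] 0, ∀ t : I, 1 - ε ≤ (t:ℝ) → δ t ∈ Ω₁ := by
      have : δ ⁻¹' Ω₁ ∈ nhds (1 : I) := (hΩ₁o.preimage δ.continuous).mem_nhds hΩ₁m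
      obtain ⟨r, hr, hball⟩ := Metric.mem_nhds_iff.1 this
      filter_upwards [nhdsWithin_le_nhds (Iio_mem_nhds hr), self_mem_nhdsWithin]
        with ε hε hε0 t ht
      apply hball
      rw [Metric.mem_ball, Subtype.dist_eq, Real.dist_eq]
      rw [Set.mem_Iio] at hε
      have h1t : (t:ℝ) ≤ 1 := t.2.2
      rw [abs_of_nonpos (by norm_num [h1t])]
      have h11 : ((1:I):ℝ) = 1 := rfl
      rw [h11]
      linarith
    have l5 : ∀ᶠ ε : ℝ in 𝓝[>] 0, ∀ s : F, (0:I) ∉ K s → ∀ t ∈ K s, ε < (t:ℝ) := by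
      rw [eventually_all]
      intro s
      by_cases hs : (0:I) ∈ K s
      · filter_upwards with ε h
        exact absurd hs h
      · have hcl : IsClosed (K s) := (hKc s).isClosed
        have : (K s)ᶜ ∈ nhds (0:I) := hcl.isOpen_compl.mem_nhds hs
        obtain ⟨r, hr, hball⟩ := Metric.mem_nhds_iff.1 this
        filter_upwards [nhdsWithin_le_nhds (Iio_mem_nhds hr)] with ε hε _ t ht
        rw [Set.mem_Iio] at hε
        by_contra hcon
        push_neg at hcon
        apply hball (show t ∈ Metric.ball (0:I) r from ?_) ht
        rw [Metric.mem_ball, Subtype.dist_eq, Real.dist_eq]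
        have h0t : (0:ℝ) ≤ (t:ℝ) := t.2.1
        rw [abs_of_nonneg (by norm_num [h0t])]
        have : ((0:I):ℝ) = 0 := rfl
        rw [this]
        linarith
    have l6 : ∀ᶠ ε : ℝ in 𝓝[>] 0, ∀ s : F, (1:I) ∉ K s → ∀ t ∈ K s, (t:ℝ) < 1 - ε := by
      rw [eventually_all]
      intro s
      by_cases hs : (1:I) ∈ K s
      · filter_upwards with ε h
        exact absurd hs h
      · have hcl : IsClosed (K s) := (hKc s).isClosed
        have : (K s)ᶜ ∈ nhds (1:I) := hcl.isOpen_compl.mem_nhds hs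
        obtain ⟨r, hr, hball⟩ := Metric.mem_nhds_iff.1 this
        filter_upwards [nhdsWithin_le_nhds (Iio_mem_nhds hr)] with ε hε _ t ht
        rw [Set.mem_Iio] at hε
        by_contra hcon
        push_neg at hcon
        apply hball (show t ∈ Metric.ball (1:I) r from ?_) ht
        rw [Metric.mem_ball, Subtype.dist_eq, Real.dist_eq]
        have h1t : (t:ℝ) ≤ 1 := t.2.2
        rw [abs_of_nonpos (by norm_num [h1t])]
        have : ((1:I):ℝ) = 1 := rfl
        rw [this]
        linarith
    exact (((((l1.and l2).and l3).and l4).and l5).and l6).exists.imp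
      (fun ε h => ⟨h.1.1.1.1.1, h.1.1.1.1.2, h.1.1.1.2, h.1.1.2, h.1.2, h.2⟩)
  obtain ⟨ε, hε, hε3, htail0, htail1, hK0, hK1⟩ := hev
  refine ⟨Ω₀, Ω₁, hΩ₀o, hΩ₁o, hΩ₀m, hΩ₁m, hΩ₀V, hΩ₁U, ?_⟩
  intro b hb a ha
  set e0 : I := ⟨ε, ⟨le_of_lt hε, by linarith⟩⟩ with he0
  set e1 : I := ⟨1 - ε, ⟨by linarith, by linarith⟩⟩ with he1
  have hc₀ := hΩ₀pc.joinedIn b hb (δ e0) (htail0 e0 (le_refl ε))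
  have hc₁ := hΩ₁pc.joinedIn (δ e1) (htail1 e1 (le_refl _)) a ha
  set c₀ := hc₀.somePath with hc₀def
  set c₁ := hc₁.somePath with hc₁def
  have hc₀mem : ∀ t, c₀ t ∈ Ω₀ := fun t => hc₀.somePath_mem t
  have hc₁mem : ∀ t, c₁ t ∈ Ω₁ := fun t => hc₁.somePath_mem t
  -- the perturbed map
  have hE0 : ((e0 : I) : ℝ) = ε := rfl
  have hE1 : ((e1 : I) : ℝ) = 1 - ε := rfl
  have h00 : (((0:I)) : ℝ) = 0 := rfl
  have h11 : (((1:I)) : ℝ) = 1 := rfl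
  have hpr0 : prI 0 = 0 := by ext; exact prI_of_mem ⟨le_refl 0, zero_le_one⟩
  have hpr1 : prI 1 = 1 := by ext; exact prI_of_mem ⟨zero_le_one, le_refl 1⟩
  have hcont : Continuous (fun t : I => if (t:ℝ) ≤ ε then c₀ (prI ((t:ℝ)/ε))
      else if (t:ℝ) ≤ 1-ε then δ t else c₁ (prI (((t:ℝ)-(1-ε))/ε))) := by
    have hinner : Continuous (fun t : I => if (t:ℝ) ≤ 1-ε then δ t
        else c₁ (prI (((t:ℝ)-(1-ε))/ε))) := by
      apply Continuous.if_le δ.continuous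
        (c₁.continuous.comp (continuous_projIcc.comp
          ((continuous_subtype_val.sub continuous_const).div_const ε)))
        continuous_subtype_val continuous_const
      intro t ht
      try dsimp only at ht
      show δ t = c₁ (prI (((t:ℝ) - (1-ε))/ε))
      have ht' : t = e1 := Subtype.ext ht
      rw [ht, ht']
      have h2 : ((1:ℝ) - ε - (1 - ε))/ε = 0 := by ring_nf
      rw [h2, hpr0, c₁.source]
    apply Continuous.if_le
      (c₀.continuous.comp (continuous_projIcc.comp (continuous_subtype_val.div_const ε)))
      hinner continuous_subtype_val continuous_const
    intro t ht
    try dsimp only at ht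
    show c₀ (prI ((t:ℝ)/ε)) = if (t:ℝ) ≤ 1-ε then δ t else c₁ (prI (((t:ℝ)-(1-ε))/ε))
    have ht' : t = e0 := Subtype.ext ht
    rw [ht, ht']
    rw [if_pos (show ε ≤ 1-ε by linarith)]
    rw [div_self (ne_of_gt hε), hpr1, c₀.target]
  set f : C(I, X) := ⟨fun t : I => if (t:ℝ) ≤ ε then c₀ (prI ((t:ℝ)/ε))
      else if (t:ℝ) ≤ 1-ε then δ t else c₁ (prI (((t:ℝ)-(1-ε))/ε)), hcont⟩ with hfdef
  have hfval : ∀ t : I, f t = if (t:ℝ) ≤ ε then c₀ (prI ((t:ℝ)/ε))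
      else if (t:ℝ) ≤ 1-ε then δ t else c₁ (prI (((t:ℝ)-(1-ε))/ε)) := fun t => rfl
  -- f ∈ M
  have hfM : f ∈ M := by
    apply hwM
    intro s hs
    rw [show s = {g : C(I, X) | Set.MapsTo ⇑g (K ⟨s, hs⟩) (W ⟨s, hs⟩)} from hseq ⟨s, hs⟩]
    intro t ht
    rw [hfval]
    split_ifs with h1' h2'
    · have h0K : (0:I) ∈ K ⟨s, hs⟩ := by
        by_contra hcon
        exact absurd h1' (not_le.2 (hK0 ⟨s, hs⟩ hcon t ht))
      exact hΩ₀W ⟨s, hs⟩ h0K (hc₀mem _)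
    · exact hδs ⟨s, hs⟩ ht
    · have h1K : (1:I) ∈ K ⟨s, hs⟩ := by
        by_contra hcon
        push_neg at h2'
        exact absurd h2' (not_lt.2 (le_of_lt (hK1 ⟨s, hs⟩ hcon t ht)))
      exact hΩ₁W ⟨s, hs⟩ h1K (hc₁mem _)
  -- segment identifications
  have hseg1 : ∀ t : I, sgm f 0 e0 t = c₀ t := by
    intro t
    rw [sgm_apply]
    have harg : ((0:I):ℝ) + (t:ℝ) * ((e0:ℝ) - ((0:I):ℝ)) = (t:ℝ) * ε := by
      rw [h00, hE0]; ring
    rw [harg]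
    have hmem : (t:ℝ) * ε ∈ Set.Icc (0:ℝ) 1 := by
      constructor
      · exact mul_nonneg t.2.1 (le_of_lt hε)
      · nlinarith [t.2.2, t.2.1]
    have hcoe : ((prI ((t:ℝ)*ε)) : ℝ) = (t:ℝ)*ε := prI_of_mem hmem
    rw [hfval]
    rw [if_pos (show ((prI ((t:ℝ)*ε)) : ℝ) ≤ ε by rw [hcoe]; nlinarith [t.2.2])]
    congr 1
    rw [hcoe, mul_div_assoc, div_self (ne_of_gt hε), mul_one, prI_coe]
  have hseg2 : ∀ t : I, sgm f e0 e1 t = sgm δ e0 e1 t := by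
    intro t
    rw [sgm_apply, sgm_apply, hfval]
    set w : ℝ := (e0:ℝ) + (t:ℝ) * ((e1:ℝ) - (e0:ℝ)) with hw
    have hwe : w = ε + (t:ℝ) * (1 - 2*ε) := by rw [hw, hE0, hE1]; ring
    have hw1 : ε ≤ w := by rw [hwe]; nlinarith [t.2.1]
    have hw2 : w ≤ 1 - ε := by rw [hwe]; nlinarith [t.2.2]
    have hwc : ((prI w) : ℝ) = w := prI_of_mem ⟨by linarith, by linarith⟩
    rcases le_or_gt w ε with h | h
    · have hweq : w = ε := le_antisymm h hw1
      have hpw : prI w = e0 := by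
        ext; rw [hwc, hweq]; try exact hE0.symm
      rw [if_pos (by rw [hwc]; exact h)]
      have hone : ((prI w):ℝ)/ε = 1 := by
        rw [hwc, hweq]; exact div_self (ne_of_gt hε)
      rw [hone, hpr1, c₀.target, hpw]
    · rw [if_neg (by rw [hwc]; exact not_le.2 h),
        if_pos (by rw [hwc]; exact hw2)]
  have hseg3 : ∀ t : I, sgm f e1 1 t = c₁ t := by
    intro t
    rw [sgm_apply, hfval]
    set w : ℝ := (e1:ℝ) + (t:ℝ) * (((1:I):ℝ) - (e1:ℝ)) with hw
    have hwe : w = (1-ε) + (t:ℝ) * ε := by rw [hw, hE1, h11]; ring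
    have hw1 : 1 - ε ≤ w := by rw [hwe]; nlinarith [t.2.1]
    have hw2 : w ≤ 1 := by rw [hwe]; nlinarith [t.2.2]
    have hwc : ((prI w) : ℝ) = w := prI_of_mem ⟨by linarith, hw2⟩
    rw [if_neg (by rw [hwc]; intro hcon; linarith)]
    rcases le_or_gt w (1-ε) with h | h
    · have hweq : w = 1 - ε := le_antisymm h hw1
      have ht0 : (t:ℝ) = 0 := by
        by_contra hcon
        have hpos : (0:ℝ) < (t:ℝ) := lt_of_le_of_ne t.2.1 (Ne.symm hcon)
        nlinarith
      have hpw : prI w = e1 := by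
        ext; rw [hwc, hweq]; try exact hE1.symm
      rw [if_pos (by rw [hwc]; exact h)]
      have htt : t = 0 := Subtype.ext ht0
      rw [htt, c₁.source, hpw]
    · rw [if_neg (by rw [hwc]; exact not_le.2 h)]
      congr 1
      rw [hwc, hwe]
      have harg : ((1:ℝ) - ε + (t:ℝ)*ε - (1-ε))/ε = (t:ℝ) := by
        field_simp
        ring
      rw [harg, prI_coe]
  -- ordering facts
  have h0e0 : (0:I) ≤ e0 := by
    show ((0:I):ℝ) ≤ ε
    norm_num
    exact le_of_lt hε
  have he0e1 : e0 ≤ e1 := by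
    show (ε:ℝ) ≤ 1 - ε
    linarith
  have he11 : e1 ≤ (1:I) := by
    show (1:ℝ) - ε ≤ 1
    linarith
  -- the connecting paths
  set α : Path (δ 0) b := (sgm δ 0 e0).trans c₀.symm with hαdef
  set β : Path (δ 1) a := (sgm δ e1 1).symm.trans c₁ with hβdef
  have hsgmΩ₀ : Set.range (sgm δ 0 e0) ⊆ Ω₀ := by
    apply sgm_range_subset h0e0
    intro y hy
    exact htail0 y (le_trans hy.2 (le_refl ε))
  have hsgmΩ₁ : Set.range (sgm δ e1 1) ⊆ Ω₁ := by
    apply sgm_range_subset he11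
    intro y hy
    exact htail1 y hy.1
  refine ⟨f, α, β, hfM, ?_, ?_, ?_⟩
  · rw [hαdef, Path.trans_range, Path.symm_range]
    refine Set.union_subset (hsgmΩ₀.trans hΩ₀V) ?_
    intro y hy
    obtain ⟨t, rfl⟩ := hy
    exact hΩ₀V (hc₀mem t)
  · rw [hβdef, Path.trans_range, Path.symm_range]
    refine Set.union_subset (hsgmΩ₁.trans hΩ₁U) ?_
    intro y hy
    obtain ⟨t, rfl⟩ := hy
    exact hΩ₁U (hc₁mem t)
  · have step1 : mk f = cl (sgm f 0 1) := by
      rw [← cl_toPath f, sgm_zero_one]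
    have step2 : cl (sgm f 0 1) =
        cl ((sgm f 0 e0).trans ((sgm f e0 e1).trans (sgm f e1 1))) := by
      apply cl_fgh
      rw [fgh_trans, fgh_trans, sgm_trans f he0e1 he11, sgm_trans f h0e0 (le_trans he0e1 he11)]
    have step3 : cl ((sgm f 0 e0).trans ((sgm f e0 e1).trans (sgm f e1 1))) =
        cl (c₀.trans ((sgm δ e0 e1).trans c₁)) := by
      apply cl_funext
      apply trans_apply_congr hseg1
      exact trans_apply_congr hseg2 hseg3
    rw [step1, step2, step3]
    apply cl_fgh
    have hδ01 : fgh (toPath δ) = fgh (sgm δ 0 e0) ≫ (fgh (sgm δ e0 e1) ≫ fgh (sgm δ e1 1)) := by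
      rw [sgm_trans δ he0e1 he11, sgm_trans δ h0e0 (le_trans he0e1 he11), ← sgm_zero_one]
    simp only [fgh_trans, fgh_symm, hαdef, hβdef, hδ01]
    simp [Category.assoc]

end PiOneAux

namespace PiOneAux

open CategoryTheory Filter Topology

variable {X : Type*} [TopologicalSpace X]

lemma mk_continuous : Continuous (mk : C(I, X) → PiOne X) :=
  continuous_coinduced_rng

theorem sheet_compact [PathConnectedSpace X] [LocallyPathConnectedSpace X]
    {u v : X} (η : Path u v) {U V : Set X}
    (hUo : IsOpen U) (hVo : IsOpen V) (hUpc : IsPathConnected U) (hVpc : IsPathConnected V)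
    (hUnull : NullIn U) (hVnull : NullIn V) (hu : u ∈ V) (hv : v ∈ U)
    {D : Set (X × X)} (hD : IsCompact D) (hDsub : D ⊆ U ×ˢ V) :
    IsCompact (Sheet η U V ∩ PiOne.kin ⁻¹' D) := by
  classical
  haveI : Nonempty X := ⟨u⟩
  set s : X × X → PiOne X := fun z =>
    if h : z.1 ∈ U ∧ z.2 ∈ V then
      cl (((hVpc.joinedIn u hu z.2 h.2).somePath).symm.trans
        (η.trans ((hUpc.joinedIn v hv z.1 h.1).somePath)))
    else cl (Path.refl (Classical.arbitrary X)) with hsdef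
  have hsval : ∀ (z : X × X) (h : z.1 ∈ U ∧ z.2 ∈ V),
      s z = cl (((hVpc.joinedIn u hu z.2 h.2).somePath).symm.trans
        (η.trans ((hUpc.joinedIn v hv z.1 h.1).somePath))) := by
    intro z h
    simp only [hsdef]
    exact dif_pos h
  have hsmem : ∀ (z : X × X) (h : z.1 ∈ U ∧ z.2 ∈ V), s z ∈ Sheet η U V := by
    intro z h
    rw [hsval z h]
    refine ⟨z.2, z.1, (hVpc.joinedIn u hu z.2 h.2).somePath,
      (hUpc.joinedIn v hv z.1 h.1).somePath, ?_, ?_, rfl⟩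
    · rintro _ ⟨t, rfl⟩; exact JoinedIn.somePath_mem _ t
    · rintro _ ⟨t, rfl⟩; exact JoinedIn.somePath_mem _ t
  have hskin : ∀ (z : X × X) (h : z.1 ∈ U ∧ z.2 ∈ V), PiOne.kin (s z) = z := by
    intro z h
    rw [hsval z h, kin_cl]
  have heq : Sheet η U V ∩ PiOne.kin ⁻¹' D = s '' D := by
    ext c
    constructor
    · rintro ⟨hc, hd⟩
      have hz := hDsub hd
      rw [Set.mem_prod] at hz
      have hthis := sheet_fiber_unique hUnull hVnull (hsmem _ ⟨hz.1, hz.2⟩) hc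
        (hskin _ ⟨hz.1, hz.2⟩)
      exact ⟨PiOne.kin c, hd, hthis⟩
    · rintro ⟨z, hz, rfl⟩
      have hz' := hDsub hz
      rw [Set.mem_prod] at hz'
      refine ⟨hsmem z ⟨hz'.1, hz'.2⟩, ?_⟩
      rw [Set.mem_preimage, hskin z ⟨hz'.1, hz'.2⟩]
      exact hz
  have hcont : ∀ z ∈ U ×ˢ V, ContinuousAt s z := by
    intro z hz
    rw [Set.mem_prod] at hz
    set α₀ := (hVpc.joinedIn u hu z.2 hz.2).somePath with hα₀
    set β₀ := (hUpc.joinedIn v hv z.1 hz.1).somePath with hβ₀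
    have hsz : s z = cl (α₀.symm.trans (η.trans β₀)) := hsval z ⟨hz.1, hz.2⟩
    set ρ : Path z.2 z.1 := α₀.symm.trans (η.trans β₀) with hρ
    rw [continuousAt_def]
    intro A hA
    obtain ⟨O, hOA, hOo, hOmem⟩ := mem_nhds_iff.1 hA
    have hMo : IsOpen (mk ⁻¹' O) := hOo.preimage mk_continuous
    have hδO : ρ.toContinuousMap ∈ mk ⁻¹' O := by
      show mk ρ.toContinuousMap ∈ O
      show cl ρ ∈ O
      rw [← hsz]
      exact hOmem
    have hδ0 : ρ.toContinuousMap 0 ∈ V := by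
      show ρ 0 ∈ V
      rw [ρ.source]
      exact hz.2
    have hδ1 : ρ.toContinuousMap 1 ∈ U := by
      show ρ 1 ∈ U
      rw [ρ.target]
      exact hz.1
    obtain ⟨Ω₀, Ω₁, hΩ₀o, hΩ₁o, hΩ₀m, hΩ₁m, hΩ₀V, hΩ₁U, hperturb⟩ :=
      tail_perturb ρ.toContinuousMap hMo hδO hUo hVo hδ0 hδ1
    have hz1m : z.1 ∈ Ω₁ := by
      have hh : ρ.toContinuousMap 1 = z.1 := ρ.target
      rwa [hh] at hΩ₁m
    have hz2m : z.2 ∈ Ω₀ := by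
      have hh : ρ.toContinuousMap 0 = z.2 := ρ.source
      rwa [hh] at hΩ₀m
    refine Filter.mem_of_superset ((hΩ₁o.prod hΩ₀o).mem_nhds ⟨hz1m, hz2m⟩) ?_
    rintro ⟨a, b⟩ ⟨ha, hb⟩
    obtain ⟨f, αt, βt, hfM, hαt, hβt, heqn⟩ := hperturb b hb a ha
    have haU : a ∈ U := hΩ₁U ha
    have hbV : b ∈ V := hΩ₀V hb
    have hfghρ : fgh ρ = inv (fgh α₀) ≫ (fgh η ≫ fgh β₀) := by
      rw [hρ, fgh_trans, fgh_symm, fgh_trans]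
    have hfsheet : mk f ∈ Sheet η U V := by
      refine ⟨b, a, α₀.trans (αt.cast ρ.source.symm rfl),
        β₀.trans (βt.cast ρ.target.symm rfl), ?_, ?_, ?_⟩
      · rw [Path.trans_range]
        refine Set.union_subset (fun y hy => ?_) ?_
        · obtain ⟨t, rfl⟩ := hy
          exact JoinedIn.somePath_mem _ t
        · rw [Path.cast_coe]
          exact hαt
      · rw [Path.trans_range]
        refine Set.union_subset (fun y hy => ?_) ?_
        · obtain ⟨t, rfl⟩ := hy
          exact JoinedIn.somePath_mem _ t
        · rw [Path.cast_coe]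
          exact hβt
      · rw [heqn]
        apply cl_fgh
        rw [toPath_coe]
        simp only [fgh_trans, fgh_symm, fgh_cast, hfghρ]
        simp [Category.assoc]
    have hkinf : PiOne.kin (mk f) = (a, b) := by
      have h2 := congrArg PiOne.kin heqn
      rwa [kin_cl] at h2
    have hsab : s (a, b) = mk f :=
      sheet_fiber_unique hUnull hVnull (hsmem (a, b) ⟨haU, hbV⟩) hfsheet
        (by rw [hskin (a, b) ⟨haU, hbV⟩, hkinf])
    show s (a, b) ∈ A
    rw [hsab]
    exact hOA hfM
  rw [heq]
  exact hD.image_of_continuousOn fun z hz => (hcont z (hDsub hz)).continuousWithinAt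

theorem reverse_direction [PathConnectedSpace X] [LocallyPathConnectedSpace X]
    [LocallyCompactSpace X] [T2Space X]
    (hslsc : ∀ x : X, ∃ S ∈ nhds x, NullIn S)
    (hfin : ∀ x : X, Finite (Path.Homotopic.Quotient x x))
    {K : Set (X × X)} (hK : IsCompact K) : IsCompact (PiOne.kin ⁻¹' K) := by
  classical
  have hfin2 : ∀ u v : X, Finite (Path.Homotopic.Quotient u v) := by
    intro u v
    set p := PathConnectedSpace.somePath u v with hp
    haveI : Finite ((⟨u⟩ : FundamentalGroupoid X) ⟶ ⟨u⟩) := hfin u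
    refine Finite.of_injective (fun c : Path.Homotopic.Quotient u v =>
      (show (⟨u⟩ : FundamentalGroupoid X) ⟶ ⟨v⟩ from c) ≫ inv (fgh p)) ?_
    intro c c' h
    have h2 := congrArg (fun e => e ≫ fgh p) h
    simp only [Category.assoc, IsIso.inv_hom_id, Category.comp_id] at h2
    exact h2
  -- choose nice boxes around every point of `X × X`
  have hbox : ∀ z : X × X, ∃ (U V C1 C2 : Set X),
      IsOpen U ∧ IsOpen V ∧ IsPathConnected U ∧ IsPathConnected V ∧ NullIn U ∧ NullIn V ∧
      z.1 ∈ U ∧ z.2 ∈ V ∧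
      IsCompact C1 ∧ IsCompact C2 ∧ C1 ⊆ U ∧ C2 ⊆ V ∧ C1 ∈ nhds z.1 ∧ C2 ∈ nhds z.2 := by
    intro z
    obtain ⟨U, hUo, hU1, hUpc, hUnull, -⟩ := nice_nbhd hslsc z.1 Filter.univ_mem
    obtain ⟨V, hVo, hV2, hVpc, hVnull, -⟩ := nice_nbhd hslsc z.2 Filter.univ_mem
    obtain ⟨C1, hC1n, hC1sub, hC1c⟩ :=
      LocallyCompactSpace.local_compact_nhds z.1 U (hUo.mem_nhds hU1)
    obtain ⟨C2, hC2n, hC2sub, hC2c⟩ :=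
      LocallyCompactSpace.local_compact_nhds z.2 V (hVo.mem_nhds hV2)
    exact ⟨U, V, C1, C2, hUo, hVo, hUpc, hVpc, hUnull, hVnull, hU1, hV2,
      hC1c, hC2c, hC1sub, hC2sub, hC1n, hC2n⟩
  choose Uz Vz C1z C2z hUo hVo hUpc hVpc hUnull hVnull hU1 hV2 hC1c hC2c hC1sub hC2sub
    hC1n hC2n using hbox
  obtain ⟨t, ht⟩ := hK.elim_nhds_subcover (fun z => C1z z ×ˢ C2z z)
    (fun z _ => prod_mem_nhds (hC1n z) (hC2n z))
  have hsplit : PiOne.kin ⁻¹' K = ⋃ z ∈ t, PiOne.kin ⁻¹' (K ∩ (C1z z ×ˢ C2z z)) := by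
    ext c
    simp only [Set.mem_iUnion, Set.mem_preimage, Set.mem_inter_iff]
    constructor
    · intro hc
      have := ht.2 hc
      simp only [Set.mem_iUnion] at this
      obtain ⟨z, hzt, hzbox⟩ := this
      exact ⟨z, hzt, hc, hzbox⟩
    · rintro ⟨z, hzt, hc, -⟩
      exact hc
  rw [hsplit]
  refine t.finite_toSet.isCompact_biUnion fun z _ => ?_
  set D := K ∩ (C1z z ×ˢ C2z z) with hD
  have hDc : IsCompact D := hK.inter_right (((hC1c z).prod (hC2c z)).isClosed)
  have hDsub : D ⊆ Uz z ×ˢ Vz z := by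
    rintro w ⟨-, hw⟩
    rw [Set.mem_prod] at hw ⊢
    exact ⟨hC1sub z hw.1, hC2sub z hw.2⟩
  haveI := hfin2 z.2 z.1
  have hdecomp : PiOne.kin ⁻¹' D = ⋃ c : Path.Homotopic.Quotient z.2 z.1,
      (Sheet (Quotient.out c) (Uz z) (Vz z) ∩ PiOne.kin ⁻¹' D) := by
    ext e
    simp only [Set.mem_iUnion, Set.mem_inter_iff, Set.mem_preimage]
    constructor
    · intro he
      have hsub := hDsub he
      rw [Set.mem_prod] at hsub
      obtain ⟨η, hη⟩ := sheet_cover (hUpc z) (hVpc z) (hV2 z) (hU1 z) e hsub.1 hsub.2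
      refine ⟨⟦η⟧, ?_, he⟩
      have hout : fgh (Quotient.out (⟦η⟧ : Path.Homotopic.Quotient z.2 z.1)) = fgh η :=
        Quotient.out_eq _
      rw [sheet_congr hout]
      exact hη
    · rintro ⟨c, -, he⟩
      exact he
  rw [hdecomp]
  exact isCompact_iUnion fun c => sheet_compact (Quotient.out c) (hUo z) (hVo z)
    (hUpc z) (hVpc z) (hUnull z) (hVnull z) (hV2 z) (hU1 z) hDc hDsub

end PiOneAux


/-- Let `X` be path connected, locally path connected, semilocally
simply connected, locally compact and Hausdorff. The action of `Π₁(X)` on `X` itself is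
proper (the map `[γ] ↦ (γ 1, γ 0)` has compact preimages of compact sets) iff the
fundamental group `π₁(X)` is finite. -/
theorem pi_one_acts_properly_on_units_iff {X : Type*} [TopologicalSpace X]
    [PathConnectedSpace X] [LocallyPathConnectedSpace X] [LocallyCompactSpace X] [T2Space X]
    (hslsc : ∀ x : X, ∃ U ∈ nhds x, ∀ (z : X) (γ : Path z z),
      Set.range γ ⊆ U → γ.Homotopic (Path.refl z)) :
    (∀ K : Set (X × X), IsCompact K → IsCompact (PiOne.kin ⁻¹' K)) ↔
      ∀ x : X, Finite (Path.Homotopic.Quotient x x) := by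
  have hslsc' : ∀ x : X, ∃ S ∈ nhds x, PiOneAux.NullIn S := hslsc
  constructor
  · intro hprop x
    exact PiOneAux.forward_direction hslsc' hprop x
  · intro hfin K hK
    exact PiOneAux.reverse_direction hslsc' hfin hK
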